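/- arXiv:2006.12545 — 4 statements merged into one kernel-verified Lean document; each statement's English description precedes it below -/
import Mathlib

section
/- Let f be a complex polynomial, not identically zero, let m be the number of zeros of f in the open unit disk {|z| < 1} counted with multiplicity, and let λ be the number of zeros of f on the unit circle {|z| = 1} counted with multiplicity. Then the number of θ ∈ [0, 2π) such that Re(f(e^{iθ})) = 0 is at least 2m + λ. -/
open Polynomial Complex Set


noncomputable def brAux (r : ℂ) (θ : ℝ) : ℝ :=
  if ‖r‖ < 1 then θ + (1 - r * Complex.exp (-θ * Complex.I)).arg
  else if ‖r‖ = 1 then (θ + r.arg + Real.pi) / 2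
  else (-r).arg + (1 - Complex.exp (θ * Complex.I) / r).arg

private lemma key2 (a b : ℝ) : Complex.exp (((a+b):ℝ) * Complex.I) - Complex.exp (((b-a):ℝ) * Complex.I)
    = ((2 * Real.sin a : ℝ) : ℂ) * Complex.exp (((b + Real.pi/2):ℝ) * Complex.I) := by
  have e : ∀ x : ℝ, Complex.exp ((x:ℂ) * Complex.I)
      = (Real.cos x : ℂ) + (Real.sin x : ℂ) * Complex.I := fun x => by
    rw [Complex.exp_mul_I, ← Complex.ofReal_cos, ← Complex.ofReal_sin]
  rw [e, e, e, Complex.ext_iff]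
  constructor <;>
    simp [Real.cos_add, Real.sin_add, Real.sin_sub, Real.cos_sub] <;>
    ring

lemma brAux_spec (r : ℂ) (θ : ℝ) :
    ∃ t : ℝ, Complex.exp (θ * Complex.I) - r = t * Complex.exp (brAux r θ * Complex.I) := by
  unfold brAux
  rcases lt_trichotomy (‖r‖) 1 with h | h | h
  · rw [if_pos h]
    refine ⟨‖1 - r * Complex.exp (-θ * Complex.I)‖, ?_⟩
    have hw := Complex.norm_mul_exp_arg_mul_I (1 - r * Complex.exp (-θ * Complex.I))
    have h1 : Complex.exp ((θ:ℂ) * I) * Complex.exp (-(θ:ℂ) * I) = 1 := by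
      rw [← Complex.exp_add]; ring_nf; exact Complex.exp_zero
    push_cast
    rw [add_mul, Complex.exp_add]
    linear_combination (-Complex.exp ((θ:ℂ)*I)) * hw + r * h1
  · rw [if_neg (by simp [h]), if_pos h]
    refine ⟨2 * Real.sin ((θ - r.arg)/2), ?_⟩
    have hr : r = Complex.exp (r.arg * I) := by
      conv_lhs => rw [← Complex.norm_mul_exp_arg_mul_I r]
      rw [h]; simp
    have h2 := key2 ((θ - r.arg)/2) ((θ + r.arg)/2)
    rw [show ((θ - r.arg)/2 + (θ + r.arg)/2 : ℝ) = θ by ring,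
        show ((θ + r.arg)/2 - (θ - r.arg)/2 : ℝ) = r.arg by ring,
        show ((θ + r.arg)/2 + Real.pi/2 : ℝ) = (θ + r.arg + Real.pi)/2 by ring] at h2
    rw [← hr] at h2
    exact h2
  · rw [if_neg (by linarith), if_neg (by linarith)]
    have hr0 : r ≠ 0 := by
      intro h0; rw [h0] at h; simp at h; linarith
    refine ⟨‖r‖ * ‖1 - Complex.exp (θ*Complex.I)/r‖, ?_⟩
    have hw := Complex.norm_mul_exp_arg_mul_I (1 - Complex.exp ((θ:ℂ) * I) / r)
    have hr := Complex.norm_mul_exp_arg_mul_I (-r)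
    rw [norm_neg] at hr
    push_cast
    rw [add_mul, Complex.exp_add]
    have heq : (‖r‖ : ℂ) * ‖1 - Complex.exp ((θ:ℂ) * I) / r‖ *
        (Complex.exp ((-r).arg * I) * Complex.exp ((1 - Complex.exp ((θ:ℂ) * I) / r).arg * I))
        = (-r) * (1 - Complex.exp ((θ:ℂ) * I) / r) := by
      calc (‖r‖ : ℂ) * ‖1 - Complex.exp ((θ:ℂ) * I) / r‖ *
          (Complex.exp ((-r).arg * I) * Complex.exp ((1 - Complex.exp ((θ:ℂ) * I) / r).arg * I))
          = ((‖r‖ : ℂ) * Complex.exp ((-r).arg * I)) *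
            ((‖1 - Complex.exp ((θ:ℂ) * I) / r‖ : ℂ) *
              Complex.exp ((1 - Complex.exp ((θ:ℂ) * I) / r).arg * I)) := by ring
        _ = (-r) * (1 - Complex.exp ((θ:ℂ) * I) / r) := by rw [hw, hr]
    rw [heq]
    field_simp
    ring


private lemma arg_cont_at {g : ℝ → ℂ} {θ : ℝ} (hg : ContinuousAt g θ)
    (hlt : ‖g θ‖ < 1) : ContinuousAt (fun t => (1 - g t).arg) θ := by
  have hc : ContinuousAt (fun t : ℝ => 1 - g t) θ := continuousAt_const.sub hg
  refine (Complex.continuousAt_arg ?_).comp hc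
  left
  have h1 := Complex.abs_re_le_norm (g θ)
  have h2 := abs_lt.mp (lt_of_le_of_lt h1 hlt)
  simp only [Complex.sub_re, Complex.one_re]
  linarith [h2.2]

private lemma abs_exp_real_mul_I (x : ℝ) : ‖Complex.exp ((x:ℂ) * Complex.I)‖ = 1 :=
  Complex.norm_exp_ofReal_mul_I x

lemma brAux_continuous (r : ℂ) : Continuous (brAux r) := by
  unfold brAux
  rcases lt_trichotomy (‖r‖) 1 with h | h | h
  · simp only [if_pos h]
    refine continuous_id.add (continuous_iff_continuousAt.2 fun θ => ?_)
    refine arg_cont_at (by fun_prop) ?_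
    rw [norm_mul]
    have : (-(θ:ℂ)) * Complex.I = ((-θ : ℝ) : ℂ) * Complex.I := by push_cast; ring
    rw [this, abs_exp_real_mul_I, mul_one]
    exact h
  · simp only [if_neg (by simp [h] : ¬ ‖r‖ < 1), if_pos h]
    fun_prop
  · simp only [if_neg (by linarith : ¬ ‖r‖ < 1), if_neg (by linarith : ¬ ‖r‖ = 1)]
    refine continuous_const.add (continuous_iff_continuousAt.2 fun θ => ?_)
    refine arg_cont_at (by fun_prop) ?_
    rw [norm_div, abs_exp_real_mul_I]
    rw [div_lt_one (by linarith)]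
    linarith

lemma brAux_shift (r : ℂ) (θ : ℝ) :
    brAux r (θ + 2 * Real.pi) = brAux r θ +
      (if ‖r‖ < 1 then 2 * Real.pi else if ‖r‖ = 1 then Real.pi else 0) := by
  unfold brAux
  have keyp : ∀ x : ℝ, Complex.exp (((x + 2*Real.pi : ℝ):ℂ) * Complex.I)
      = Complex.exp ((x:ℂ) * Complex.I) := by
    intro x
    rw [show ((x + 2*Real.pi : ℝ):ℂ) * Complex.I = (x:ℂ)*Complex.I + 2*(Real.pi:ℂ)*Complex.I by
      push_cast; ring]
    rw [Complex.exp_add, Complex.exp_two_pi_mul_I, mul_one]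
  have keyn : ∀ x : ℝ, Complex.exp (-((x + 2*Real.pi : ℝ):ℂ) * Complex.I)
      = Complex.exp (-(x:ℂ) * Complex.I) := by
    intro x
    rw [show -((x + 2*Real.pi : ℝ):ℂ) * Complex.I
        = -(x:ℂ)*Complex.I - 2*(Real.pi:ℂ)*Complex.I by push_cast; ring]
    rw [Complex.exp_sub, Complex.exp_two_pi_mul_I, div_one]
  rcases lt_trichotomy (‖r‖) 1 with h | h | h
  · simp only [if_pos h]
    rw [keyn θ]
    ring
  · simp only [if_neg (by simp [h] : ¬ ‖r‖ < 1), if_pos h]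
    ring
  · simp only [if_neg (by linarith : ¬ ‖r‖ < 1),
      if_neg (by linarith : ¬ ‖r‖ = 1)]
    rw [keyp θ]
    ring

noncomputable def GS (s : Multiset ℂ) (θ : ℝ) : ℝ := (s.map (fun r => brAux r θ)).sum

lemma GS_continuous (s : Multiset ℂ) : Continuous (GS s) := by
  induction s using Multiset.induction_on with
  | empty =>
    have : GS 0 = fun _ => (0:ℝ) := by funext θ; simp [GS]
    rw [this]; exact continuous_const
  | cons r s ih =>
    have : GS (r ::ₘ s) = fun θ => brAux r θ + GS s θ := by
      funext θ; simp [GS, Multiset.map_cons, Multiset.sum_cons]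
    rw [this]
    exact (brAux_continuous r).add ih

lemma GS_shift (s : Multiset ℂ) (θ : ℝ) :
    GS s (θ + 2 * Real.pi) = GS s θ +
      (2 * Real.pi) * (Multiset.card (s.filter fun z => ‖z‖ < 1)) +
      Real.pi * (Multiset.card (s.filter fun z => ‖z‖ = 1)) := by
  induction s using Multiset.induction_on with
  | empty => simp [GS]
  | cons r s ih =>
    simp only [GS, Multiset.map_cons, Multiset.sum_cons] at *
    rw [ih, brAux_shift]
    rcases lt_trichotomy (‖r‖) 1 with h | h | h
    · rw [if_pos h, Multiset.filter_cons_of_pos _ (by exact h), Multiset.card_cons,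
        Multiset.filter_cons_of_neg _ (by simp [h.ne])]
      push_cast
      ring
    · rw [if_neg (by simp [h]), if_pos h, Multiset.filter_cons_of_neg _ (by simp [h]),
        Multiset.filter_cons_of_pos _ (by exact h), Multiset.card_cons]
      push_cast
      ring
    · rw [if_neg (by linarith), if_neg (by linarith),
        Multiset.filter_cons_of_neg _ (by exact not_lt.2 h.le),
        Multiset.filter_cons_of_neg _ (by exact ne_of_gt h)]
      push_cast
      ring

lemma GS_prod_spec (s : Multiset ℂ) (θ : ℝ) :
    ∃ t : ℝ, (s.map (fun r => Complex.exp (θ * Complex.I) - r)).prod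
      = t * Complex.exp (GS s θ * Complex.I) := by
  induction s using Multiset.induction_on with
  | empty => exact ⟨1, by simp [GS]⟩
  | cons r s ih =>
    obtain ⟨t, ht⟩ := ih
    obtain ⟨u, hu⟩ := brAux_spec r θ
    refine ⟨u * t, ?_⟩
    simp only [GS, Multiset.map_cons, Multiset.prod_cons, Multiset.sum_cons] at *
    rw [ht, hu]
    rw [show ((brAux r θ + (s.map (fun r => brAux r θ)).sum : ℝ) : ℂ) * Complex.I
        = (brAux r θ : ℂ) * Complex.I + ((s.map (fun r => brAux r θ)).sum : ℝ) * Complex.I by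
      push_cast; ring, Complex.exp_add]
    push_cast
    ring


private lemma expInjOn : Set.InjOn (fun θ : ℝ => Complex.exp (θ * Complex.I))
    (Ico 0 (2 * Real.pi)) := by
  intro x hx y hy hxy
  simp only at hxy
  rw [Complex.exp_eq_exp_iff_exists_int] at hxy
  obtain ⟨n, hn⟩ := hxy
  have him : x = y + n * (2 * Real.pi) := by
    have := congrArg Complex.im hn
    simpa using this
  have hπ := Real.pi_pos
  rcases hx with ⟨hx0, hx2⟩
  rcases hy with ⟨hy0, hy2⟩
  have h1 : (n : ℝ) * (2 * Real.pi) < 2 * Real.pi := by linarith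
  have h2 : -(2 * Real.pi) < (n : ℝ) * (2 * Real.pi) := by linarith
  have hn1 : (n : ℝ) < 1 := by nlinarith
  have hn2 : (-1 : ℝ) < n := by nlinarith
  have hb1 : n < 1 := by exact_mod_cast hn1
  have hb2 : (-1 : ℤ) < n := by exact_mod_cast hn2
  have : n = 0 := by omega
  rw [this] at him; simpa using him

private lemma infinite_case (f : Polynomial ℂ) (hf : f ≠ 0)
    (hinf : {θ : ℝ | θ ∈ Ico 0 (2 * Real.pi) ∧
      (f.eval (Complex.exp (θ * Complex.I))).re = 0}.Infinite) : f.natDegree = 0 := by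
  set n := f.natDegree with hn
  by_contra hne
  have hn1 : 1 ≤ n := Nat.one_le_iff_ne_zero.2 hne
  set g : Polynomial ℂ := X ^ n * f +
    (Finset.range (n + 1)).sum
      (fun k => C ((starRingEnd ℂ) (f.coeff k)) * X ^ (n - k)) with hg
  have hgz : ∀ θ : ℝ, (f.eval (Complex.exp (θ * Complex.I))).re = 0 →
      g.IsRoot (Complex.exp (θ * Complex.I)) := by
    intro θ hθ
    set z := Complex.exp (θ * Complex.I) with hz
    have hz1 : z * (starRingEnd ℂ) z = 1 := by
      rw [Complex.mul_conj]
      norm_cast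
      rw [← Complex.sq_norm, hz, Complex.norm_exp_ofReal_mul_I]
      norm_num
    have hfz : f.eval z = (Finset.range (n + 1)).sum (fun k => f.coeff k * z ^ k) :=
      eval_eq_sum_range z
    have hsum : (Finset.range (n + 1)).sum
        (fun k => (starRingEnd ℂ) (f.coeff k) * z ^ (n - k))
        = z ^ n * (starRingEnd ℂ) (f.eval z) := by
      rw [hfz, map_sum, Finset.mul_sum]
      refine Finset.sum_congr rfl fun k hk => ?_
      rw [Finset.mem_range] at hk
      have hkn : k ≤ n := Nat.lt_succ_iff.mp hk
      rw [map_mul, map_pow]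
      have : z ^ n = z ^ (n - k) * z ^ k := by rw [← pow_add, Nat.sub_add_cancel hkn]
      rw [this]
      have : z ^ k * ((starRingEnd ℂ) z) ^ k = 1 := by
        rw [← mul_pow, hz1, one_pow]
      calc (starRingEnd ℂ) (f.coeff k) * z ^ (n - k)
          = (starRingEnd ℂ) (f.coeff k) * (z ^ (n-k) * (z ^ k * ((starRingEnd ℂ) z) ^ k)) := by
            rw [this]; ring
        _ = z ^ (n - k) * z ^ k * ((starRingEnd ℂ) (f.coeff k) * ((starRingEnd ℂ) z) ^ k) := by
            ring
    have hre : f.eval z + (starRingEnd ℂ) (f.eval z) = 0 := by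
      rw [Complex.add_conj, hθ]
      norm_num
    unfold g
    simp only [IsRoot, eval_add, eval_mul, eval_pow, eval_X, eval_finset_sum, eval_mul, eval_C,
      eval_pow, eval_X]
    rw [hsum]
    rw [← mul_add, hre, mul_zero]
  have himg : {x : ℂ | g.IsRoot x}.Infinite := by
    refine Set.Infinite.mono ?_ (Set.Infinite.image (expInjOn.mono (fun θ hθ => hθ.1)) hinf)
    rintro w ⟨θ, hθ, rfl⟩
    exact hgz θ hθ.2
  have hg0 : g = 0 := g.eq_zero_of_infinite_isRoot himg
  have hcoeff : g.coeff (n + n) = f.coeff n := by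
    rw [hg, coeff_add, coeff_X_pow_mul, finset_sum_coeff]
    have : ∀ k ∈ Finset.range (n + 1),
        (C ((starRingEnd ℂ) (f.coeff k)) * X ^ (n - k)).coeff (n + n) = 0 := by
      intro k hk
      rw [coeff_C_mul, coeff_X_pow, if_neg, mul_zero]
      omega
    rw [Finset.sum_eq_zero this, add_zero]
  rw [hg0] at hcoeff
  simp only [coeff_zero] at hcoeff
  exact (Polynomial.leadingCoeff_ne_zero.2 hf) hcoeff.symm

/-- Let `f` be a nonzero complex polynomial, `m` the number of zeros of `f` in
the open unit disk and `lam` the number of zeros of `f` on the unit circle, both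
counted with multiplicity.  Then the number of `θ ∈ [0, 2π)` with
`Re (f (e^{iθ}))` = 0` is at least `2m + lam`. -/
theorem real_part_zeros_on_circle
    (f : Polynomial ℂ) (hf : f ≠ 0) :
    2 * Multiset.card (f.roots.filter fun z => ‖z‖ < 1) +
        Multiset.card (f.roots.filter fun z => ‖z‖ = 1) ≤
      Set.ncard {θ : ℝ | θ ∈ Ico 0 (2 * Real.pi) ∧
        (f.eval (Complex.exp (θ * Complex.I))).re = 0} := by
  set S := {θ : ℝ | θ ∈ Ico 0 (2 * Real.pi) ∧
      (f.eval (Complex.exp (θ * Complex.I))).re = 0} with hS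
  by_cases hfin : S.Finite
  swap
  · -- infinite case
    have hinf : S.Infinite := hfin
    have hdeg := infinite_case f hf hinf
    have hfC := Polynomial.eq_C_of_natDegree_eq_zero hdeg
    rw [hfC, roots_C]
    simp
  -- finite case
  set m := Multiset.card (f.roots.filter fun z => ‖z‖ < 1) with hm
  set lam := Multiset.card (f.roots.filter fun z => ‖z‖ = 1) with hlam
  set N := 2 * m + lam with hN
  set lc := f.leadingCoeff with hlc
  have hlc0 : lc ≠ 0 := Polynomial.leadingCoeff_ne_zero.2 hf
  set G : ℝ → ℝ := fun θ => lc.arg + GS f.roots θ with hG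
  have hGc : Continuous G := continuous_const.add (GS_continuous f.roots)
  -- evaluation formula
  have heval : ∀ θ : ℝ, ∃ t : ℝ,
      f.eval (Complex.exp (θ * Complex.I)) = t * Complex.exp (G θ * Complex.I) := by
    intro θ
    obtain ⟨t, ht⟩ := GS_prod_spec f.roots θ
    refine ⟨‖lc‖ * t, ?_⟩
    have hsplit := Splits.eq_prod_roots (IsAlgClosed.splits f)
    conv_lhs => rw [hsplit]
    rw [eval_mul, eval_C, eval_multiset_prod, Multiset.map_map]
    have hmap : (f.roots.map ((fun p => eval (Complex.exp (θ * Complex.I)) p) ∘ fun a => X - C a))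
        = f.roots.map (fun r => Complex.exp (θ * Complex.I) - r) := by
      apply Multiset.map_congr rfl
      intro r _
      simp
    rw [hmap, ht, ← hlc]
    have hlceq := Complex.norm_mul_exp_arg_mul_I lc
    rw [hG]
    rw [show ((lc.arg + GS f.roots θ : ℝ) : ℂ) * Complex.I
        = (lc.arg : ℂ) * Complex.I + ((GS f.roots θ : ℝ) : ℂ) * Complex.I by push_cast; ring,
      Complex.exp_add, Complex.ofReal_mul]
    linear_combination (-(t:ℂ)) * Complex.exp (((GS f.roots θ : ℝ) : ℂ) * Complex.I) * hlceq
  have hre : ∀ θ : ℝ, Real.cos (G θ) = 0 → (f.eval (Complex.exp (θ * Complex.I))).re = 0 := by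
    intro θ hcos
    obtain ⟨t, ht⟩ := heval θ
    rw [ht, Complex.re_ofReal_mul, Complex.exp_ofReal_mul_I_re, hcos, mul_zero]
  have hπ := Real.pi_pos
  have hshift : G (2 * Real.pi) = G 0 + Real.pi * N := by
    have := GS_shift f.roots 0
    rw [zero_add] at this
    rw [hG]
    simp only [this]
    rw [hN]
    push_cast
    ring
  set A := G 0 with hA
  set c : ℤ := ⌈(A - Real.pi / 2) / Real.pi⌉ with hc
  set v : ℕ → ℝ := fun k => Real.pi / 2 + Real.pi * (c + k) with hv
  have hv_lb : ∀ k : ℕ, A ≤ v k := by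
    intro k
    have h1 : (A - Real.pi / 2) / Real.pi ≤ c := Int.le_ceil _
    have h3 : Real.pi * ((A - Real.pi / 2) / Real.pi) = A - Real.pi / 2 := by field_simp
    have h4 := mul_le_mul_of_nonneg_left h1 hπ.le
    have : (0:ℝ) ≤ Real.pi * k := by positivity
    simp only [hv]
    nlinarith
  have hv_ub : ∀ k : ℕ, k < N → v k < A + Real.pi * N := by
    intro k hk
    have h1 : (c : ℝ) < (A - Real.pi / 2) / Real.pi + 1 := Int.ceil_lt_add_one _
    have h3 : Real.pi * ((A - Real.pi / 2) / Real.pi) = A - Real.pi / 2 := by field_simp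
    have h4 := mul_lt_mul_of_pos_left h1 hπ
    have hk1 : (k : ℝ) + 1 ≤ N := by exact_mod_cast hk
    have h5 : Real.pi * ((k:ℝ) + 1) ≤ Real.pi * N := mul_le_mul_of_nonneg_left hk1 hπ.le
    simp only [hv]
    nlinarith
  have hGle : A ≤ G (2 * Real.pi) := by
    rw [hshift]
    have : (0:ℝ) ≤ Real.pi * N := by positivity
    linarith
  have hIVT := intermediate_value_Icc (by positivity : (0:ℝ) ≤ 2 * Real.pi) hGc.continuousOn
  have hex : ∀ k : Fin N, ∃ x ∈ Icc (0:ℝ) (2 * Real.pi), G x = v k := by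
    intro k
    have : v k ∈ Icc A (G (2 * Real.pi)) :=
      ⟨hv_lb k, by rw [hshift]; exact (hv_ub k k.2).le⟩
    obtain ⟨x, hx, hGx⟩ := hIVT this
    exact ⟨x, hx, hGx⟩
  choose ψ hψmem hψval using hex
  have hψS : ∀ k : Fin N, ψ k ∈ S := by
    intro k
    refine ⟨⟨(hψmem k).1, lt_of_le_of_ne (hψmem k).2 fun he => ?_⟩, ?_⟩
    · have := hψval k
      rw [he, hshift] at this
      exact absurd this (ne_of_gt (hv_ub k k.2))
    · refine hre _ ?_
      rw [hψval k]
      rw [Real.cos_eq_zero_iff]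
      exact ⟨c + k, by push_cast [hv]; ring⟩
  have hψinj : Function.Injective ψ := by
    intro k j hkj
    have : v k = v j := by rw [← hψval k, ← hψval j, hkj]
    simp only [hv] at this
    have : (k : ℝ) = j := by
      field_simp at this
      linarith
    exact Fin.ext (by exact_mod_cast this)
  have hcard : (Finset.univ.image ψ).card = N := by
    rw [Finset.card_image_of_injective _ hψinj, Finset.card_univ, Fintype.card_fin]
  have hsub : ↑(Finset.univ.image ψ) ⊆ S := by
    intro x hx
    simp only [Finset.coe_image, Set.mem_image] at hx
    obtain ⟨k, _, rfl⟩ := hx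
    exact hψS k
  calc N = (↑(Finset.univ.image ψ) : Set ℝ).ncard := by rw [Set.ncard_coe_finset, hcard]
    _ ≤ S.ncard := Set.ncard_le_ncard hsub hfin
end

section
/- Let f be holomorphic and not identically zero on a neighborhood of z₀ ∈ ℂ, with a zero of order λ ≥ 1 at z₀. Then there exist C > 0 and ε₀ > 0 such that for all 0 < ε < ε₀ and all θ ∈ [0, 2π], f(z₀ + ε e^{iθ}) ≠ 0 and |Im( i ε e^{iθ} f′(z₀ + ε e^{iθ}) / f(z₀ + ε e^{iθ}) ) − λ| ≤ C ε. In particular, for ε small enough the derivative with respect to θ of any continuous branch of arg f(z₀ + ε e^{iθ}) is strictly positive on all of [0, 2π]. -/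
open Complex Set

/-- If `f` is holomorphic near `z₀` with a zero of order `lam ≥ 1` at `z₀`
(i.e. `f u = (u - z₀) ^ lam * g u` with `g` holomorphic and `g z₀ ≠ 0`), then
there are `C > 0`, `ε₀ > 0` such that for all `0 < ε < ε₀` and `θ ∈ [0, 2π]`,
`f (z₀ + ε e^{iθ}) ≠ 0` and
`|Im (i ε e^{iθ} f' (z₀ + ε e^{iθ}) / f (z₀ + ε e^{iθ})) − lam| ≤ C ε`.
In particular, for `ε` small enough this angular derivative of the argument of
`f` is strictly positive on all of `[0, 2π]`. -/
theorem arg_derivative_near_zero_of_order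
    (f g : ℂ → ℂ) (z₀ : ℂ) (U : Set ℂ) (hU : IsOpen U) (hz₀ : z₀ ∈ U)
    (hf : DifferentiableOn ℂ f U) (hg : DifferentiableOn ℂ g U)
    (lam : ℕ) (hlam : 1 ≤ lam) (hgz₀ : g z₀ ≠ 0)
    (hfac : ∀ u ∈ U, f u = (u - z₀) ^ lam * g u) :
    (∃ C > (0 : ℝ), ∃ ε₀ > (0 : ℝ), ∀ ε : ℝ, 0 < ε → ε < ε₀ →
      ∀ θ ∈ Icc (0 : ℝ) (2 * Real.pi),
        f (z₀ + ε * Complex.exp (θ * Complex.I)) ≠ 0 ∧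
        |(Complex.I * ε * Complex.exp (θ * Complex.I) *
            deriv f (z₀ + ε * Complex.exp (θ * Complex.I)) /
            f (z₀ + ε * Complex.exp (θ * Complex.I))).im - lam| ≤ C * ε) ∧
    ∃ ε₁ > (0 : ℝ), ∀ ε : ℝ, 0 < ε → ε < ε₁ →
      ∀ θ ∈ Icc (0 : ℝ) (2 * Real.pi),
        0 < (Complex.I * ε * Complex.exp (θ * Complex.I) *
            deriv f (z₀ + ε * Complex.exp (θ * Complex.I)) /
            f (z₀ + ε * Complex.exp (θ * Complex.I))).im := by
  obtain ⟨n, rfl⟩ : ∃ n, lam = n + 1 := ⟨lam - 1, (Nat.succ_pred_eq_of_pos hlam).symm⟩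
  -- a closed ball inside U on which g ≠ 0
  have hev : ∀ᶠ u in nhds z₀, u ∈ U ∧ g u ≠ 0 := by
    have h1 : ∀ᶠ u in nhds z₀, u ∈ U := hU.mem_nhds hz₀
    have h2 : ∀ᶠ u in nhds z₀, g u ≠ 0 :=
      (hg.continuousOn.continuousAt (hU.mem_nhds hz₀)).eventually_ne hgz₀
    exact h1.and h2
  obtain ⟨δ, hδ, hδball⟩ := Metric.eventually_nhds_iff.1 hev
  set r : ℝ := δ / 2 with hr
  have hrpos : 0 < r := by positivity
  have hK : ∀ u ∈ Metric.closedBall z₀ r, u ∈ U ∧ g u ≠ 0 := by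
    intro u hu
    exact hδball (lt_of_le_of_lt (Metric.mem_closedBall.1 hu) (by linarith))
  -- deriv g is continuous on U
  have hdg : ContinuousOn (deriv g) U := by
    have : AnalyticOnNhd ℂ g U := hg.analyticOnNhd hU
    exact this.deriv.continuousOn
  -- bound ‖deriv g u / g u‖ on the closed ball
  have hcomp : IsCompact (Metric.closedBall z₀ r) := isCompact_closedBall z₀ r
  have hcont : ContinuousOn (fun u => ‖deriv g u / g u‖) (Metric.closedBall z₀ r) := by
    apply ContinuousOn.norm
    apply ContinuousOn.div
    · exact hdg.mono fun u hu => (hK u hu).1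
    · exact hg.continuousOn.mono fun u hu => (hK u hu).1
    · exact fun u hu => (hK u hu).2
  obtain ⟨M, hM⟩ := hcomp.exists_bound_of_continuousOn hcont
  set C : ℝ := M + 1 with hC
  have hCpos : 0 < C := by
    have := hM z₀ (Metric.mem_closedBall_self hrpos.le)
    simp only [norm_norm] at this
    have : (0:ℝ) ≤ M := le_trans (norm_nonneg _) this
    linarith
  have hMC : ∀ u ∈ Metric.closedBall z₀ r, ‖deriv g u / g u‖ ≤ C := by
    intro u hu
    have := hM u hu
    simp only [norm_norm] at this
    linarith
  -- the key estimate
  have key : ∀ ε : ℝ, 0 < ε → ε < r → ∀ θ : ℝ,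
      f (z₀ + ε * Complex.exp (θ * Complex.I)) ≠ 0 ∧
      |(Complex.I * ε * Complex.exp (θ * Complex.I) *
          deriv f (z₀ + ε * Complex.exp (θ * Complex.I)) /
          f (z₀ + ε * Complex.exp (θ * Complex.I))).im - (n+1 : ℕ)| ≤ C * ε := by
    intro ε hε hεr θ
    set w : ℂ := (ε : ℂ) * Complex.exp (θ * Complex.I) with hw
    set u : ℂ := z₀ + w with hu
    have hwnorm : ‖w‖ = ε := by
      simp [hw, abs_of_pos hε]
    have hwne : w ≠ 0 := by
      intro h; rw [h] at hwnorm; simp at hwnorm; linarith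
    have huball : u ∈ Metric.closedBall z₀ r := by
      simp only [Metric.mem_closedBall, hu, dist_eq_norm]
      rw [show z₀ + w - z₀ = w by ring, hwnorm]
      linarith
    obtain ⟨huU, hgu⟩ := hK u huball
    have husub : u - z₀ = w := by rw [hu]; ring
    have hfu : f u = w ^ (n+1) * g u := by rw [hfac u huU, husub]
    have hfune : f u ≠ 0 := by
      rw [hfu]; exact mul_ne_zero (pow_ne_zero _ hwne) hgu
    refine ⟨hfune, ?_⟩
    -- compute deriv f
    have hderiv : deriv f u = (n+1 : ℂ) * w^n * g u + w^(n+1) * deriv g u := by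
      have hg' : HasDerivAt g (deriv g u) u :=
        (hg.differentiableAt (hU.mem_nhds huU)).hasDerivAt
      have hp : HasDerivAt (fun v => (v - z₀) ^ (n+1)) ((n+1 : ℂ) * (u - z₀)^n) u := by
        have := ((hasDerivAt_id u).sub_const z₀).fun_pow (n+1)
        simpa using this
      have hmul := hp.mul hg'
      have heq : f =ᶠ[nhds u] fun v => (v - z₀)^(n+1) * g v := by
        filter_upwards [hU.mem_nhds huU] with v hv using hfac v hv
      rw [(hmul.congr_of_eventuallyEq heq).deriv, husub]
    -- the main algebraic identity
    have halg : Complex.I * ε * Complex.exp (θ * Complex.I) * deriv f u / f u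
        = Complex.I * (n+1 : ℕ) + Complex.I * w * (deriv g u / g u) := by
      have : Complex.I * ε * Complex.exp (θ * Complex.I) = Complex.I * w := by
        rw [hw]; ring
      rw [this, hderiv, hfu]
      field_simp
      push_cast
      ring
    rw [halg]
    have him : (Complex.I * (n+1 : ℕ) + Complex.I * w * (deriv g u / g u)).im
        = (n+1 : ℕ) + (Complex.I * w * (deriv g u / g u)).im := by
      simp
    rw [him]
    rw [add_sub_cancel_left]
    calc |(Complex.I * w * (deriv g u / g u)).im|
        ≤ ‖Complex.I * w * (deriv g u / g u)‖ := Complex.abs_im_le_norm _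
      _ = ε * ‖deriv g u / g u‖ := by
          rw [norm_mul, norm_mul, Complex.norm_I, one_mul, hwnorm]
      _ ≤ ε * C := by
          exact mul_le_mul_of_nonneg_left (hMC u huball) hε.le
      _ = C * ε := mul_comm _ _
  constructor
  · exact ⟨C, hCpos, r, hrpos, fun ε hε hεr θ _ => key ε hε hεr θ⟩
  · refine ⟨min r (1 / C), lt_min hrpos (by positivity), fun ε hε hε₁ θ hθ => ?_⟩
    obtain ⟨-, hbd⟩ := key ε hε (lt_of_lt_of_le hε₁ (min_le_left _ _)) θ
    have hCε : C * ε < 1 := by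
      have : ε < 1 / C := lt_of_lt_of_le hε₁ (min_le_right _ _)
      rw [lt_div_iff₀ hCpos] at this; linarith
    obtain ⟨h1, -⟩ := abs_le.1 hbd
    push_cast at h1
    have hn0 : (0:ℝ) ≤ n := Nat.cast_nonneg n
    set x := (Complex.I * ε * Complex.exp (θ * Complex.I) *
            deriv f (z₀ + ε * Complex.exp (θ * Complex.I)) /
            f (z₀ + ε * Complex.exp (θ * Complex.I))).im with hx
    nlinarith [h1, hCε, hn0]
end

section
/- Let f be holomorphic and not identically zero on a neighborhood of z₀ ∈ ℂ, with a zero of order λ ≥ 1 at z₀, and let L be a line through the origin. Then for all sufficiently small ε > 0 (small enough that z₀ is the only zero of f in the closed disk of radius ε around z₀), the number of points z on the circle |z − z₀| = ε with f(z) ∈ L is exactly 2λ. -/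
open Complex Set

private lemma log_lip (u v : ℂ) (hu : ‖u - 1‖ ≤ 1/2) (hv : ‖v - 1‖ ≤ 1/2) :
    ‖Complex.log u - Complex.log v‖ ≤ 2 * ‖u - v‖ := by
  have hconv : Convex ℝ (Metric.closedBall (1:ℂ) (1/2)) := convex_closedBall _ _
  have key : ∀ z ∈ Metric.closedBall (1:ℂ) (1/2),
      HasDerivWithinAt Complex.log z⁻¹ (Metric.closedBall (1:ℂ) (1/2)) z := by
    intro z hz
    rw [Metric.mem_closedBall, dist_eq_norm] at hz
    have hre : (1:ℝ)/2 ≤ z.re := by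
      have h0 : |(z - 1).re| ≤ ‖z - 1‖ := Complex.abs_re_le_norm (z - 1)
      simp only [Complex.sub_re, Complex.one_re] at h0
      have := abs_le.1 (h0.trans hz)
      linarith [this.1]
    exact (Complex.hasDerivAt_log (Or.inl (by linarith))).hasDerivWithinAt
  have bound : ∀ z ∈ Metric.closedBall (1:ℂ) (1/2), ‖z⁻¹‖ ≤ 2 := by
    intro z hz
    rw [Metric.mem_closedBall, dist_eq_norm] at hz
    have h1 : (1:ℝ)/2 ≤ ‖z‖ := by
      have h2 : ‖z - 1‖ ≥ ‖(1:ℂ)‖ - ‖z‖ := by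
        have := norm_sub_norm_le (1:ℂ) z
        rwa [norm_sub_rev] at this
      simp only [norm_one] at h2
      linarith
    rw [norm_inv, inv_le_comm₀ (by linarith) (by norm_num)]
    linarith
  have := hconv.norm_image_sub_le_of_norm_hasDerivWithin_le key bound
    (by simpa [Metric.mem_closedBall, dist_eq_norm] using hv)
    (by simpa [Metric.mem_closedBall, dist_eq_norm] using hu)
  simpa using this

private lemma count_pi_multiples (x : ℝ) (n : ℕ) :
    {k : ℤ | x < k * Real.pi ∧ (k:ℝ) * Real.pi ≤ x + 2 * Real.pi * n}.ncard = 2 * n := by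
  have hπ := Real.pi_pos
  set π := Real.pi
  have : {k : ℤ | x < k * π ∧ (k:ℝ) * π ≤ x + 2 * π * n} = Set.Ioc ⌊x/π⌋ (⌊x/π⌋ + 2*n) := by
    ext k
    simp only [mem_setOf_eq, Set.mem_Ioc]
    constructor
    · rintro ⟨h1, h2⟩
      constructor
      · rw [Int.floor_lt, div_lt_iff₀ hπ]
        linarith
      · have hle : (k:ℝ) - 2*n ≤ x / π := by
          rw [le_div_iff₀ hπ]; nlinarith
        have h3 : ((k - 2*(n:ℤ) : ℤ) : ℝ) ≤ x / π := by push_cast; push_cast at hle; linarith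
        have := Int.le_floor.2 h3
        omega
    · rintro ⟨h1, h2⟩
      have h1' : x / π < k := Int.floor_lt.1 h1
      have h2' : ((k : ℤ) - 2*n : ℤ) ≤ ⌊x/π⌋ := by omega
      have h2'' : ((k:ℝ) - 2*n) ≤ x / π := by
        have := Int.le_floor.1 h2'
        push_cast at this; linarith [this, (Int.floor_le (x/π))]
      constructor
      · calc x = (x/π)*π := by field_simp
             _ < k * π := by apply mul_lt_mul_of_pos_right h1' hπ
      · have := mul_le_mul_of_nonneg_right h2'' hπ.le
        rw [div_mul_cancel₀ _ hπ.ne'] at this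
        nlinarith
  rw [this, ← Finset.coe_Ioc, Set.ncard_coe_finset, Int.card_Ioc]
  omega

private lemma circleMap_injOn (c : ℂ) (R : ℝ) (hR : R ≠ 0) :
    Set.InjOn (circleMap c R) (Set.Ioc 0 (2*Real.pi)) := by
  intro θ₁ h₁ θ₂ h₂ heq
  simp only [circleMap] at heq
  have h3 : Complex.exp (θ₁ * I) = Complex.exp (θ₂ * I) := by
    exact mul_left_cancel₀ (Complex.ofReal_ne_zero.2 hR) (add_left_cancel heq)
  rw [Complex.exp_eq_exp_iff_exists_int] at h3
  obtain ⟨m, hm⟩ := h3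
  have hc : (θ₁ : ℂ) = θ₂ + m * (2*Real.pi) := by
    have hI : (θ₁:ℂ) * I = ((θ₂:ℂ) + m*(2*Real.pi)) * I := by rw [hm]; ring
    exact mul_right_cancel₀ I_ne_zero hI
  have hr : θ₁ = θ₂ + m * (2*Real.pi) := by exact_mod_cast hc
  have hπ := Real.pi_pos
  have hm0 : m = 0 := by
    rcases h₁ with ⟨ha, hb⟩; rcases h₂ with ⟨hc', hd⟩
    by_contra hne
    rcases lt_or_gt_of_ne hne with h | h
    · have hm1 : m ≤ -1 := Int.le_sub_one_of_lt (by simpa using h)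
      have : (m:ℝ) ≤ -1 := by exact_mod_cast hm1
      nlinarith
    · have : (1:ℝ) ≤ m := by exact_mod_cast h
      nlinarith
  rw [hm0] at hr; simpa using hr

/-- If `f` is holomorphic near `z₀` with a zero of order `lam ≥ 1` at `z₀`
(i.e. `f u = (u - z₀) ^ lam * g u` with `g` holomorphic and `g z₀ ≠ 0`), and `L`
is the line `{t • w : t ∈ ℝ}` through the origin (`w ≠ 0`), then for all
sufficiently small `ε > 0` (small enough that the closed disk of radius `ε`
around `z₀` lies in the domain and contains no zero of `f` other than `z₀`),
the number of points `z` on the circle `|z − z₀| = ε` with `f z ∈ L` is exactly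
`2 * lam`. -/
theorem circle_line_preimage_count_at_zero
    (f g : ℂ → ℂ) (z₀ : ℂ) (U : Set ℂ) (hU : IsOpen U) (hz₀ : z₀ ∈ U)
    (hf : DifferentiableOn ℂ f U) (hg : DifferentiableOn ℂ g U)
    (lam : ℕ) (hlam : 1 ≤ lam) (hgz₀ : g z₀ ≠ 0)
    (hfac : ∀ u ∈ U, f u = (u - z₀) ^ lam * g u)
    (w : ℂ) (hw : w ≠ 0) :
    ∃ ε₀ > (0 : ℝ), ∀ ε : ℝ, 0 < ε → ε < ε₀ →
      Metric.closedBall z₀ ε ⊆ U ∧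
      (∀ z ∈ Metric.closedBall z₀ ε, f z = 0 → z = z₀) ∧
      Set.ncard {z : ℂ | ‖z - z₀‖ = ε ∧ ∃ t : ℝ, f z = t * w} = 2 * lam := by
  have hπ := Real.pi_pos
  have hgn : 0 < ‖g z₀‖ := norm_pos_iff.2 hgz₀
  -- a closed ball inside U
  obtain ⟨r', hr', hball'⟩ := Metric.isOpen_iff.1 hU z₀ hz₀
  set r := r'/2 with hrdef
  have hr : 0 < r := by positivity
  have hballU : Metric.closedBall z₀ r ⊆ U := by
    refine subset_trans ?_ hball'
    intro z hz
    rw [Metric.mem_closedBall] at hz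
    rw [Metric.mem_ball]
    linarith
  -- bound on deriv g
  have hgana : AnalyticOnNhd ℂ g U := hg.analyticOnNhd hU
  have hderivcont : ContinuousOn (deriv g) U := hgana.deriv.continuousOn
  obtain ⟨K', hK'⟩ := (isCompact_closedBall z₀ r).exists_bound_of_continuousOn
    (hderivcont.mono hballU)
  set K := max K' 0 with hKdef
  have hK0 : 0 ≤ K := le_max_right _ _
  have hK : ∀ x ∈ Metric.closedBall z₀ r, ‖deriv g x‖ ≤ K :=
    fun x hx => (hK' x hx).trans (le_max_left _ _)
  -- Lipschitz bound for g on the ball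
  have hgLip : ∀ x ∈ Metric.closedBall z₀ r, ∀ y ∈ Metric.closedBall z₀ r,
      ‖g y - g x‖ ≤ K * ‖y - x‖ := by
    intro x hx y hy
    have hd : ∀ z ∈ Metric.closedBall z₀ r,
        HasDerivWithinAt g (deriv g z) (Metric.closedBall z₀ r) z := by
      intro z hz
      exact ((hg.differentiableAt (hU.mem_nhds (hballU hz))).hasDerivAt).hasDerivWithinAt
    exact (convex_closedBall z₀ r).norm_image_sub_le_of_norm_hasDerivWithin_le hd hK hx hy
  -- continuity: g close to g z₀ near z₀
  have hgc : ContinuousAt g z₀ := (hg.continuousOn.continuousAt (hU.mem_nhds hz₀))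
  obtain ⟨δ, hδ, hδball⟩ := Metric.continuousAt_iff.1 hgc (‖g z₀‖/2) (by positivity)
  set r₁ := min r (δ/2) with hr₁def
  have hr₁0 : 0 < r₁ := lt_min hr (by positivity)
  have hr₁r : r₁ ≤ r := min_le_left _ _
  have hgnear : ∀ z ∈ Metric.closedBall z₀ r₁, ‖g z - g z₀‖ ≤ ‖g z₀‖/2 := by
    intro z hz
    rw [Metric.mem_closedBall] at hz
    have : dist z z₀ < δ := lt_of_le_of_lt hz (lt_of_le_of_lt (min_le_right _ _) (by linarith))
    have := hδball this
    rw [dist_eq_norm] at this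
    exact this.le
  -- choose ε₀
  refine ⟨min r₁ (lam * ‖g z₀‖ / (8*K+8)), lt_min hr₁0 (by positivity), ?_⟩
  intro ε hε hεlt
  have hεr₁ : ε < r₁ := lt_of_lt_of_le hεlt (min_le_left _ _)
  have hεK : ε < lam * ‖g z₀‖ / (8*K+8) := lt_of_lt_of_le hεlt (min_le_right _ _)
  have hballε : Metric.closedBall z₀ ε ⊆ Metric.closedBall z₀ r₁ :=
    Metric.closedBall_subset_closedBall hεr₁.le
  have hballεr : Metric.closedBall z₀ ε ⊆ Metric.closedBall z₀ r :=
    hballε.trans (Metric.closedBall_subset_closedBall hr₁r)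
  have hballεU : Metric.closedBall z₀ ε ⊆ U := hballεr.trans hballU
  have hr₁U : Metric.closedBall z₀ r₁ ⊆ U :=
    (Metric.closedBall_subset_closedBall hr₁r).trans hballU
  refine ⟨hballεU, ?_, ?_⟩
  · -- zero condition
    intro z hz hfz
    have hzU : z ∈ U := hballεU hz
    have hgz : g z ≠ 0 := by
      intro h0
      have := hgnear z (hballε hz)
      rw [h0] at this
      simp only [zero_sub, norm_neg] at this
      linarith
    rw [hfac z hzU] at hfz
    rcases mul_eq_zero.1 hfz with h | h
    · exact sub_eq_zero.1 (pow_eq_zero_iff (n := lam) (by omega) |>.1 h)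
    · exact absurd h hgz
  · -- the counting
    set Z : ℝ → ℂ := fun θ => circleMap z₀ ε θ with hZdef
    have hZsph : ∀ θ, Z θ ∈ Metric.sphere z₀ ε := fun θ => circleMap_mem_sphere z₀ hε.le θ
    have hZmem : ∀ θ, Z θ ∈ Metric.closedBall z₀ r₁ := by
      intro θ
      have := hZsph θ
      rw [Metric.mem_sphere] at this
      rw [Metric.mem_closedBall, this]
      exact hεr₁.le
    have hZmemr : ∀ θ, Z θ ∈ Metric.closedBall z₀ r :=
      fun θ => Metric.closedBall_subset_closedBall hr₁r (hZmem θ)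
    have hZU : ∀ θ, Z θ ∈ U := fun θ => hr₁U (hZmem θ)
    set u : ℝ → ℂ := fun θ => g (Z θ) / g z₀ with hudef
    have hune : ∀ θ, ‖u θ - 1‖ ≤ 1/2 := by
      intro θ
      have h1 : u θ - 1 = (g (Z θ) - g z₀) / g z₀ := by
        simp only [hudef]; rw [sub_div, div_self hgz₀]
      rw [h1, norm_div]
      rw [div_le_iff₀ hgn]
      have := hgnear _ (hZmem θ)
      linarith
    have hu0 : ∀ θ, u θ ≠ 0 := by
      intro θ h0
      have := hune θ
      rw [h0] at this
      simp at this
      linarith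
    set β : ℝ → ℝ := fun θ => (Complex.log (u θ)).im with hβdef
    set α := Complex.arg (g z₀ / w) with hαdef
    set A : ℝ → ℝ := fun θ => lam * θ + α + β θ with hAdef
    -- Lipschitz bound on β
    have hβlip : ∀ θ₁ θ₂ : ℝ, |β θ₁ - β θ₂| ≤ ((lam:ℝ)/2) * |θ₁ - θ₂| := by
      intro θ₁ θ₂
      have h1 : |β θ₁ - β θ₂| ≤ ‖Complex.log (u θ₁) - Complex.log (u θ₂)‖ := by
        have : β θ₁ - β θ₂ = (Complex.log (u θ₁) - Complex.log (u θ₂)).im := by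
          simp [hβdef, Complex.sub_im]
        rw [this]
        exact Complex.abs_im_le_norm _
      have h2 : ‖Complex.log (u θ₁) - Complex.log (u θ₂)‖ ≤ 2 * ‖u θ₁ - u θ₂‖ :=
        log_lip _ _ (hune θ₁) (hune θ₂)
      have h3 : ‖u θ₁ - u θ₂‖ = ‖g (Z θ₁) - g (Z θ₂)‖ / ‖g z₀‖ := by
        rw [hudef]
        simp only
        rw [div_sub_div_same, norm_div]
      have h4 : ‖g (Z θ₁) - g (Z θ₂)‖ ≤ K * ‖Z θ₁ - Z θ₂‖ :=
        hgLip _ (hZmemr θ₂) _ (hZmemr θ₁)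
      have h5 : ‖Z θ₁ - Z θ₂‖ ≤ ε * |θ₁ - θ₂| := by
        have := (lipschitzWith_circleMap z₀ ε).dist_le_mul θ₁ θ₂
        rw [dist_eq_norm, dist_eq_norm] at this
        rw [Real.coe_nnabs, abs_of_pos hε] at this
        simpa using this
      have h6 : (2:ℝ) * (K * (ε * |θ₁ - θ₂|)) / ‖g z₀‖ ≤ ((lam:ℝ)/2) * |θ₁ - θ₂| := by
        rw [div_le_iff₀ hgn]
        have hl1 : (1:ℝ) ≤ lam := by exact_mod_cast hlam
        have habs : 0 ≤ |θ₁ - θ₂| := abs_nonneg _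
        have hεb : ε * (8*K+8) < lam * ‖g z₀‖ := by
          rw [← lt_div_iff₀ (by positivity)]
          exact hεK
        nlinarith [mul_le_mul_of_nonneg_right hεb.le habs, mul_nonneg hε.le habs,
          mul_nonneg (mul_nonneg (le_trans zero_le_one hl1) hgn.le) habs]
      have h45 : ‖g (Z θ₁) - g (Z θ₂)‖ ≤ K * (ε * |θ₁ - θ₂|) :=
        h4.trans (mul_le_mul_of_nonneg_left h5 hK0)
      calc |β θ₁ - β θ₂| ≤ 2 * ‖u θ₁ - u θ₂‖ := h1.trans h2
        _ = 2 * ‖g (Z θ₁) - g (Z θ₂)‖ / ‖g z₀‖ := by rw [h3]; ring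
        _ ≤ 2 * (K * (ε * |θ₁ - θ₂|)) / ‖g z₀‖ := by gcongr
        _ ≤ ((lam:ℝ)/2) * |θ₁ - θ₂| := h6
    -- strict monotonicity of A
    have hl1 : (1:ℝ) ≤ lam := by exact_mod_cast hlam
    have hmono : StrictMono A := by
      intro θ₁ θ₂ hlt
      have hb := abs_le.1 (hβlip θ₂ θ₁)
      rw [_root_.abs_of_nonneg (by linarith : (0:ℝ) ≤ θ₂ - θ₁)] at hb
      simp only [hAdef]
      nlinarith [hb.1, mul_pos (show (0:ℝ) < (lam:ℝ)/2 by linarith)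
        (show (0:ℝ) < θ₂ - θ₁ by linarith)]
    have hAcont : Continuous A := by
      have hβcont : Continuous β := by
        apply LipschitzWith.continuous (K := Real.toNNReal ((lam:ℝ)/2))
        apply LipschitzWith.of_dist_le_mul
        intro x y
        rw [Real.dist_eq, Real.dist_eq, Real.coe_toNNReal _ (by positivity)]
        exact hβlip x y
      rw [hAdef]
      exact ((continuous_const.mul continuous_id).add continuous_const).add hβcont
    have hZper : Z (2*Real.pi) = Z 0 := by
      have := periodic_circleMap z₀ ε 0
      simpa using this
    have hβper : β (2*Real.pi) = β 0 := by
      simp only [hβdef, hudef, hZper]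
    have hA2π : A (2*Real.pi) = A 0 + 2*Real.pi*lam := by
      simp only [hAdef, hβper]; ring
    -- the key pointwise equivalence
    have hkey : ∀ θ : ℝ, (∃ t : ℝ, f (Z θ) = t * w) ↔ Real.sin (A θ) = 0 := by
      intro θ
      set P : ℝ := ε^lam * ‖g z₀ / w‖ * Real.exp ((Complex.log (u θ)).re)
        with hPdef
      have habs0 : 0 < ‖g z₀ / w‖ :=
        norm_pos_iff.2 (div_ne_zero hgz₀ hw)
      have hP : 0 < P := by rw [hPdef]; positivity
      have hfeq : f (Z θ) = w * (P:ℂ) * Complex.exp ((A θ : ℝ) * I) := by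
        have h1 : Z θ - z₀ = (ε:ℂ) * Complex.exp (θ * I) := by
          show circleMap z₀ ε θ - z₀ = _
          rw [circleMap_sub_center]; simp [circleMap]
        have h2 : g (Z θ) = g z₀ * u θ := by
          simp only [hudef]; field_simp
        have h3 : (g z₀ : ℂ) = w * ((‖g z₀/w‖ : ℂ) * Complex.exp ((α:ℝ) * I)) := by
          rw [hαdef, Complex.norm_mul_exp_arg_mul_I]; field_simp
        have h4 : u θ = (Real.exp ((Complex.log (u θ)).re) : ℂ) *
            Complex.exp (((β θ : ℝ)) * I) := by
          simp only [hβdef]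
          conv_lhs => rw [← Complex.exp_log (hu0 θ)]
          rw [Complex.ofReal_exp, ← Complex.exp_add]
          congr 1
          exact (Complex.re_add_im _).symm
        have h5 : Complex.exp ((A θ : ℝ) * I) =
            (Complex.exp ((θ:ℂ) * I))^lam * Complex.exp ((α:ℝ) * I) *
              Complex.exp (((β θ : ℝ)) * I) := by
          rw [← Complex.exp_nat_mul, ← Complex.exp_add, ← Complex.exp_add]
          congr 1
          simp only [hAdef]
          push_cast
          ring
        rw [hfac _ (hZU θ), h1, h2, h3, h4, h5, hPdef]
        push_cast
        ring
      constructor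
      · rintro ⟨t, ht⟩
        have h6 : w * (t:ℂ) = w * ((P:ℂ) * Complex.exp ((A θ : ℝ) * I)) := by
          rw [mul_comm w (t:ℂ), ← ht, hfeq]; ring
        have h7 : (t:ℂ) = (P:ℂ) * Complex.exp ((A θ : ℝ) * I) :=
          mul_left_cancel₀ hw h6
        have h8 := congrArg Complex.im h7
        simp only [Complex.ofReal_im, Complex.mul_im, Complex.ofReal_re,
          Complex.exp_ofReal_mul_I_im, Complex.exp_ofReal_mul_I_re, zero_mul,
          add_zero, mul_zero, zero_add] at h8
        have := h8.symm
        rcases mul_eq_zero.1 this with h | h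
        · exact absurd h hP.ne'
        · exact h
      · intro hsin
        refine ⟨P * Real.cos (A θ), ?_⟩
        rw [hfeq]
        have hexp : Complex.exp ((A θ : ℝ) * I) = (Real.cos (A θ) : ℂ) := by
          rw [Complex.exp_mul_I, ← Complex.ofReal_cos, ← Complex.ofReal_sin, hsin]
          simp
        rw [hexp]
        push_cast
        ring
    -- rewrite the set as an image
    set T := {θ : ℝ | θ ∈ Set.Ioc 0 (2*Real.pi) ∧ Real.sin (A θ) = 0} with hTdef
    have hS : {z : ℂ | ‖z - z₀‖ = ε ∧ ∃ t : ℝ, f z = t * w} = Z '' T := by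
      ext z
      simp only [mem_setOf_eq, Set.mem_image, hTdef]
      constructor
      · rintro ⟨hnorm, t, ht⟩
        have hzsph : z ∈ Metric.sphere z₀ |ε| := by
          rw [abs_of_pos hε, Metric.mem_sphere, dist_eq_norm]; exact hnorm
        rw [← image_circleMap_Ioc z₀ ε] at hzsph
        obtain ⟨θ, hθ, hθz⟩ := hzsph
        refine ⟨θ, ⟨hθ, (hkey θ).1 ⟨t, ?_⟩⟩, hθz⟩
        show f (circleMap z₀ ε θ) = _
        rw [hθz]; exact ht
      · rintro ⟨θ, ⟨hθ, hsin⟩, rfl⟩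
        refine ⟨?_, (hkey θ).2 hsin⟩
        have := hZsph θ
        rw [Metric.mem_sphere, dist_eq_norm] at this
        exact this
    rw [hS, Set.ncard_image_of_injOn
      ((circleMap_injOn z₀ ε hε.ne').mono (fun θ hθ => hθ.1))]
    -- biject T with an integer interval
    set φ : ℝ → ℤ := fun θ => round (A θ / Real.pi) with hφdef
    have hround : ∀ θ ∈ T, (φ θ : ℝ) * Real.pi = A θ := by
      intro θ hθ
      obtain ⟨n, hn⟩ := Real.sin_eq_zero_iff.1 hθ.2
      have hdiv : A θ / Real.pi = (n:ℝ) := by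
        rw [← hn]; field_simp
      simp only [hφdef]
      rw [hdiv, round_intCast]
      exact hn
    have hinj : Set.InjOn φ T := by
      intro θ₁ h₁ θ₂ h₂ he
      apply hmono.injective
      rw [← hround θ₁ h₁, ← hround θ₂ h₂, he]
    have himg : φ '' T =
        {k : ℤ | A 0 < (k:ℝ) * Real.pi ∧ (k:ℝ) * Real.pi ≤ A 0 + 2*Real.pi*lam} := by
      ext k
      simp only [Set.mem_image, mem_setOf_eq]
      constructor
      · rintro ⟨θ, hθ, rfl⟩
        rw [hround θ hθ]
        have h0 : A 0 < A θ := hmono hθ.1.1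
        have h1 : A θ ≤ A (2*Real.pi) := hmono.monotone hθ.1.2
        rw [hA2π] at h1
        exact ⟨h0, h1⟩
      · rintro ⟨hk1, hk2⟩
        have hkIcc : (k:ℝ) * Real.pi ∈ Set.Icc (A 0) (A (2*Real.pi)) := by
          rw [hA2π]; exact ⟨hk1.le, hk2⟩
        obtain ⟨θ, hθIcc, hθA⟩ := intermediate_value_Icc
          (by positivity : (0:ℝ) ≤ 2*Real.pi) hAcont.continuousOn hkIcc
        have hθpos : 0 < θ := by
          rcases eq_or_lt_of_le hθIcc.1 with h | h
          · exfalso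
            rw [← h] at hθA
            rw [hθA] at hk1
            linarith
          · exact h
        have hθT : θ ∈ T := by
          refine ⟨⟨hθpos, hθIcc.2⟩, ?_⟩
          rw [hθA]
          exact Real.sin_int_mul_pi k
        refine ⟨θ, hθT, ?_⟩
        have he : (φ θ : ℝ) * Real.pi = (k:ℝ) * Real.pi := by
          rw [hround θ hθT, hθA]
        have := mul_right_cancel₀ hπ.ne' he
        exact_mod_cast this
    rw [← Set.ncard_image_of_injOn hinj, himg]
    exact count_pi_multiples (A 0) lam
end

section
/- Let n ≥ 2 be an even natural number and let f(z) = (z + 1)^n. Then the number of θ ∈ [0, 2π) such that f(e^{iθ}) is real (i.e. Im((e^{iθ} + 1)^n) = 0) is exactly n. (Since f has no zeros in the open unit disk and a single zero of multiplicity n on the unit circle at z = −1, this shows the bound 2m + λ of the main theorem is attained.) -/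
open Complex Set

lemma im_eq_aux (n : ℕ) (θ : ℝ) :
    ((Complex.exp (θ * Complex.I) + 1) ^ n).im
      = (2 * Real.cos (θ / 2)) ^ n * Real.sin (n * (θ / 2)) := by
  set a := Complex.exp ((θ / 2 : ℝ) * Complex.I) with ha
  have h1 : Complex.exp (θ * Complex.I) = a * a := by
    rw [ha, ← Complex.exp_add]; congr 1; push_cast; ring
  have h2 : Complex.exp (-((θ / 2 : ℝ) : ℂ) * Complex.I) * a = 1 := by
    rw [ha, ← Complex.exp_add, show -((θ / 2 : ℝ) : ℂ) * Complex.I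
      + ((θ / 2 : ℝ) : ℂ) * Complex.I = 0 by ring, Complex.exp_zero]
  have h : Complex.exp (θ * Complex.I) + 1
      = ((2 * Real.cos (θ / 2) : ℝ) : ℂ) * a := by
    rw [Complex.ofReal_mul, Complex.ofReal_cos, Complex.cos, h1]
    simp only [Complex.ofReal_ofNat]
    rw [← ha]
    linear_combination -h2
  rw [h, mul_pow, ← Complex.ofReal_pow, ha, ← Complex.exp_nat_mul,
    show (n : ℂ) * (((θ / 2 : ℝ)) * Complex.I) = ((n * (θ / 2) : ℝ) : ℂ) * Complex.I by
      push_cast; ring,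
    Complex.im_ofReal_mul, Complex.exp_ofReal_mul_I_im]

/-- For an even `n ≥ 2`, the number of `θ ∈ [0, 2π)` with
`Im ((e^{iθ} + 1) ^ n) = 0` is exactly `n`.  (With `f z = (z+1)^n`, which has no
zeros in the open unit disk and a single zero of multiplicity `n` on the unit
circle, this shows the bound `2m + λ` of the main theorem is attained.) -/
theorem exp_add_one_pow_real_count (n : ℕ) (hn : 2 ≤ n) (heven : Even n) :
    Set.ncard {θ : ℝ | θ ∈ Ico 0 (2 * Real.pi) ∧
      ((Complex.exp (θ * Complex.I) + 1) ^ n).im = 0} = n := by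
  have hπ := Real.pi_pos
  have hn0 : 0 < n := by omega
  have hnR : (0:ℝ) < n := by exact_mod_cast hn0
  have key : {θ : ℝ | θ ∈ Ico 0 (2 * Real.pi) ∧
      ((Complex.exp (θ * Complex.I) + 1) ^ n).im = 0}
      = (fun k : ℕ => 2 * Real.pi * k / n) '' ↑(Finset.range n) := by
    ext θ
    simp only [Set.mem_setOf_eq, Set.mem_Ico, Finset.coe_range, Set.mem_image, Set.mem_Iio]
    constructor
    · rintro ⟨⟨h0, h2π⟩, him⟩
      rw [im_eq_aux] at him
      rcases mul_eq_zero.1 him with hc | hs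
      · have hc0 : Real.cos (θ / 2) = 0 := by
          have h2 : 2 * Real.cos (θ / 2) = 0 :=
            pow_eq_zero_iff (by omega : n ≠ 0) |>.1 hc
          linarith
        rcases Real.cos_eq_zero_iff.1 hc0 with ⟨k, hk⟩
        have hθ : θ = (2 * (k:ℝ) + 1) * Real.pi := by
          have : θ / 2 = (2 * (k:ℝ) + 1) * Real.pi / 2 := hk
          linarith
        have hk1 : (k:ℝ) < 1 := by nlinarith
        have hk2 : (-1:ℝ) < k := by nlinarith
        have hk0 : k = 0 := by
          have a1 : k < 1 := by exact_mod_cast hk1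
          have a2 : -1 < k := by exact_mod_cast hk2
          omega
        subst hk0
        refine ⟨n / 2, by omega, ?_⟩
        obtain ⟨m, hm⟩ := heven
        have hm2 : n / 2 = m := by omega
        rw [hm2, hθ]
        have : ((n:ℝ)) = 2 * m := by rw [hm]; push_cast; ring
        have hm0 : (m:ℝ) ≠ 0 := by
          have : 0 < m := by omega
          positivity
        rw [this]
        push_cast
        field_simp
        ring
      · rcases Real.sin_eq_zero_iff.1 hs with ⟨k, hk⟩
        have hθ : θ = 2 * Real.pi * k / n := by
          rw [eq_div_iff hnR.ne']
          nlinarith [hk]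
        have hk0 : 0 ≤ k := by
          have : (0:ℝ) ≤ k := by nlinarith [hk, mul_nonneg hnR.le h0]
          exact_mod_cast this
        have hkn : (k:ℝ) < n := by nlinarith [hk]
        lift k to ℕ using hk0 with m
        exact ⟨m, by exact_mod_cast hkn, hθ.symm⟩
    · rintro ⟨k, hkn, rfl⟩
      have hkR : (k:ℝ) < n := by exact_mod_cast hkn
      refine ⟨⟨by positivity, ?_⟩, ?_⟩
      · rw [div_lt_iff₀ hnR]; nlinarith
      · rw [im_eq_aux]
        have h1 : (n:ℝ) * (2 * Real.pi * k / n / 2) = k * Real.pi := by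
          field_simp
        rw [h1, Real.sin_nat_mul_pi, mul_zero]
  rw [key, Set.ncard_image_of_injOn, Set.ncard_coe_finset, Finset.card_range]
  intro x _ y _ hxy
  field_simp at hxy
  exact_mod_cast hxy
end
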